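/- Let R be a fusion ring with basis {x_A} indexed by a finite set, fusion coefficients N_{A,B}^C ∈ ℕ, and dimension function d assigning to each basis element a positive real with d_A d_B = Σ_C N_{A,B}^C d_C. If operators O_A on a finite-dimensional complex vector space satisfy O_A O_B = Σ_C N_{A,B}^C O_C, then P := (1/D) Σ_A d_A O_A, where D := Σ_A d_A^2, satisfies P^2 = P, provided the fusion ring has a conjugation A ↦ Ā with d_Ā = d_A and Frobenius reciprocity N_{A,B}^C = N_{Ā,C}^B. -/

import Mathlib

/-- In a fusion ring with conjugation and Frobenius reciprocity,
operators representing the fusion algebra yield an idempotent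
`P = (1/D) Σ_A d_A O_A`. -/
theorem fusion_ring_projector
    {V : Type*} [AddCommGroup V] [Module ℂ V] [FiniteDimensional ℂ V]
    {ι : Type*} [Fintype ι]
    (N : ι → ι → ι → ℕ) (d : ι → ℝ) (bar : ι → ι)
    (hdpos : ∀ A, 0 < d A)
    (hdim : ∀ A B, d A * d B = ∑ C, (N A B C : ℝ) * d C)
    (hdbar : ∀ A, d (bar A) = d A)
    (hfrob : ∀ A B C, N A B C = N (bar A) C B)
    (O : ι → Module.End ℂ V)
    (hO : ∀ A B, O A * O B = ∑ C, (N A B C : ℂ) • O C)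
    (D : ℝ) (hD : D = ∑ A, d A ^ 2)
    (P : Module.End ℂ V) (hP : P = ∑ A, ((d A / D : ℝ) : ℂ) • O A) :
    P * P = P := by
  by_cases hempty : IsEmpty ι
  · simp [hP, Finset.univ_eq_empty]
  rw [not_isEmpty_iff] at hempty
  have hDpos : 0 < D := by
    rw [hD]
    exact Finset.sum_pos (fun A _ => pow_pos (hdpos A) 2) Finset.univ_nonempty
  have hDne : D ≠ 0 := ne_of_gt hDpos
  -- key real identity
  have key : ∀ C, ∑ A, ∑ B, d A * d B * (N A B C : ℝ) = D * d C := by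
    intro C
    have inner : ∀ A, ∑ B, d B * (N A B C : ℝ) = d A * d C := by
      intro A
      calc ∑ B, d B * (N A B C : ℝ)
          = ∑ B, (N (bar A) C B : ℝ) * d B := by
            refine Finset.sum_congr rfl fun B _ => ?_
            rw [hfrob A B C, mul_comm]
        _ = d (bar A) * d C := (hdim (bar A) C).symm
        _ = d A * d C := by rw [hdbar]
    calc ∑ A, ∑ B, d A * d B * (N A B C : ℝ)
        = ∑ A, d A * (d A * d C) := by
          refine Finset.sum_congr rfl fun A _ => ?_
          rw [← inner A, Finset.mul_sum]
          exact Finset.sum_congr rfl fun B _ => by ring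
      _ = D * d C := by
          rw [hD, Finset.sum_mul]
          exact Finset.sum_congr rfl fun A _ => by ring
  have coef : ∀ C, ∑ A, ∑ B, (d A / D) * (d B / D) * (N A B C : ℝ) = d C / D := by
    intro C
    have : ∑ A, ∑ B, (d A / D) * (d B / D) * (N A B C : ℝ)
        = (∑ A, ∑ B, d A * d B * (N A B C : ℝ)) / (D * D) := by
      rw [Finset.sum_div]
      refine Finset.sum_congr rfl fun A _ => ?_
      rw [Finset.sum_div]
      refine Finset.sum_congr rfl fun B _ => ?_
      field_simp
    rw [this, key C]
    field_simp
  rw [hP, Finset.sum_mul_sum]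
  have step : ∀ A B, (((d A / D : ℝ) : ℂ) • O A) * (((d B / D : ℝ) : ℂ) • O B)
      = ∑ C, ((((d A / D) * (d B / D) * (N A B C : ℝ) : ℝ)) : ℂ) • O C := by
    intro A B
    rw [smul_mul_smul_comm, hO, Finset.smul_sum]
    refine Finset.sum_congr rfl fun C _ => ?_
    rw [smul_smul]
    push_cast
    ring_nf
  simp_rw [step]
  calc ∑ A, ∑ B, ∑ C, ((((d A / D) * (d B / D) * (N A B C : ℝ) : ℝ)) : ℂ) • O C
      = ∑ A, ∑ C, ∑ B, ((((d A / D) * (d B / D) * (N A B C : ℝ) : ℝ)) : ℂ) • O C :=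
        Finset.sum_congr rfl fun A _ => Finset.sum_comm
    _ = ∑ C, ∑ A, ∑ B, ((((d A / D) * (d B / D) * (N A B C : ℝ) : ℝ)) : ℂ) • O C :=
        Finset.sum_comm
    _ = ∑ C, ((d C / D : ℝ) : ℂ) • O C := by
        refine Finset.sum_congr rfl fun C _ => ?_
        rw [← coef C]
        push_cast
        rw [Finset.sum_smul]
        exact Finset.sum_congr rfl fun A _ => by rw [Finset.sum_smul]
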